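/- Let F be a field, let I ⊆ F[x_1,...,x_N] be an ideal, and let gr I be the ideal generated by the top-degree homogeneous components τ(f) of all nonzero f ∈ I. If Z ⊆ F^N is finite, then dim_F F[x_1,...,x_N]/gr I(Z) = |Z|. -/
import Mathlib

open MvPolynomial

/-- The ideal of polynomials vanishing on a set of points Z. -/
noncomputable def vanIdeal {σ : Type*} (F : Type*) [Field F] (Z : Set (σ → F)) :
    Ideal (MvPolynomial σ F) where
  carrier := {f | ∀ x ∈ Z, MvPolynomial.eval x f = 0}
  zero_mem' := by intro x hx; simp
  add_mem' := by intro a b ha hb x hx; simp [ha x hx, hb x hx]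
  smul_mem' := by intro c f hf x hx; simp [hf x hx]

/-- The associated graded ideal: generated by the top-degree homogeneous
components of all nonzero elements of I. -/
noncomputable def grIdeal {σ : Type*} {F : Type*} [Field F]
    (I : Ideal (MvPolynomial σ F)) : Ideal (MvPolynomial σ F) :=
  Ideal.span {g | ∃ f ∈ I, f ≠ 0 ∧
    g = MvPolynomial.homogeneousComponent f.totalDegree f}

namespace GrAux

variable {σ F : Type*} [Field F]

lemma hc_homog_mul {k : ℕ} {c : MvPolynomial σ F} (hc : c ∈ homogeneousSubmodule σ F k)
    (f : MvPolynomial σ F) (m : ℕ) :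
    homogeneousComponent (k + m) (c * f) = c * homogeneousComponent m f := by
  have hmem : ∀ i, c * homogeneousComponent i f ∈ homogeneousSubmodule σ F (k + i) := fun i =>
    (mem_homogeneousSubmodule _ _).mpr
      (((mem_homogeneousSubmodule _ _).mp hc).mul (homogeneousComponent_isHomogeneous i f))
  conv_lhs => rw [← sum_homogeneousComponent f]
  rw [Finset.mul_sum, map_sum, Finset.sum_eq_single m]
  · rw [homogeneousComponent_of_mem (hmem m), if_pos rfl]
  · intro i _ hi
    rw [homogeneousComponent_of_mem (hmem i), if_neg (by omega)]
  · intro hm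
    rw [Finset.mem_range, not_lt] at hm
    rw [homogeneousComponent_eq_zero m f (by omega), mul_zero, map_zero]

lemma hc_mul_top_le {e d : ℕ} (hed : e ≤ d) {s : MvPolynomial σ F}
    (hs : s ∈ homogeneousSubmodule σ F e) (h : MvPolynomial σ F) :
    homogeneousComponent d (h * s) = homogeneousComponent (d - e) h * s := by
  have h2 := hc_homog_mul hs h (d - e)
  rw [Nat.add_sub_cancel' hed] at h2
  rw [mul_comm h s, h2, mul_comm]

lemma hc_mul_top_lt {e d : ℕ} (hde : d < e) {s : MvPolynomial σ F}
    (hs : s ∈ homogeneousSubmodule σ F e) (h : MvPolynomial σ F) :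
    homogeneousComponent d (h * s) = 0 := by
  conv_lhs => rw [← sum_homogeneousComponent h]
  rw [Finset.sum_mul, map_sum]
  refine Finset.sum_eq_zero fun i _ => ?_
  have hmem : homogeneousComponent i h * s ∈ homogeneousSubmodule σ F (i + e) :=
    (mem_homogeneousSubmodule _ _).mpr
      ((homogeneousComponent_isHomogeneous i h).mul ((mem_homogeneousSubmodule _ _).mp hs))
  rw [homogeneousComponent_of_mem hmem, if_neg (by omega)]

lemma top_ne_zero {f : MvPolynomial σ F} (hf : f ≠ 0) :
    homogeneousComponent f.totalDegree f ≠ 0 := by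
  obtain ⟨d, hd, hdeg⟩ := Finset.exists_mem_eq_sup f.support
    (support_nonempty.mpr hf) (fun m => m.degree)
  intro h0
  have hcoeff : coeff d (homogeneousComponent f.totalDegree f) = coeff d f := by
    have htot : f.totalDegree = f.support.sup fun m => m.degree := by
      simp only [totalDegree, Finsupp.degree]
      rfl
    rw [coeff_homogeneousComponent, if_pos (by rw [htot, hdeg])]
  rw [h0, coeff_zero] at hcoeff
  exact mem_support_iff.mp hd hcoeff.symm


lemma exists_lower {I : Ideal (MvPolynomial σ F)} {g : MvPolynomial σ F}
    (hg : g ∈ grIdeal I) (d : ℕ) :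
    ∃ f ∈ I, f.totalDegree ≤ d ∧
      homogeneousComponent d f = homogeneousComponent d g := by
  classical
  rw [grIdeal, Ideal.span] at hg
  obtain ⟨c, hsupp, hsum⟩ := Submodule.mem_span_set.mp hg
  have hgen : ∀ s ∈ c.support, ∃ f, f ∈ I ∧ f ≠ 0 ∧
      s = homogeneousComponent f.totalDegree f := by
    intro s hs
    have := hsupp hs
    simpa using this
  choose! Ff h1 h2 h3 using hgen
  refine ⟨∑ s ∈ c.support, if (Ff s).totalDegree ≤ d then
      homogeneousComponent (d - (Ff s).totalDegree) (c s) * Ff s else 0, ?_, ?_, ?_⟩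
  · refine Ideal.sum_mem _ fun s hs => ?_
    split
    · exact I.mul_mem_left _ (h1 s hs)
    · exact I.zero_mem
  · refine (totalDegree_finset_sum _ _).trans (Finset.sup_le fun s hs => ?_)
    split
    · next hle =>
      refine (totalDegree_mul _ _).trans ?_
      have := (homogeneousComponent_isHomogeneous (d - (Ff s).totalDegree) (c s)).totalDegree_le
      omega
    · simp
  · rw [map_sum, ← hsum, Finsupp.sum, map_sum]
    refine Finset.sum_congr rfl fun s hs => ?_
    have hs' : (s : MvPolynomial σ F) ∈ homogeneousSubmodule σ F (Ff s).totalDegree := by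
      have := homogeneousComponent_mem (Ff s).totalDegree (Ff s)
      rwa [← h3 s hs] at this
    rw [smul_eq_mul]
    by_cases hle : (Ff s).totalDegree ≤ d
    · rw [if_pos hle, hc_mul_top_le hle hs' (c s)]
      have hc' : homogeneousComponent (d - (Ff s).totalDegree) (c s) ∈
          homogeneousSubmodule σ F (d - (Ff s).totalDegree) := homogeneousComponent_mem _ _
      have h4 := hc_homog_mul hc' (Ff s) (Ff s).totalDegree
      rw [Nat.sub_add_cancel hle] at h4
      rw [h4, ← h3 s hs]
    · rw [if_neg hle, map_zero, hc_mul_top_lt (by omega) hs' (c s)]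

lemma map_inf_eq (I : Ideal (MvPolynomial σ F)) (d : ℕ) :
    Submodule.map (homogeneousComponent d)
        (Submodule.restrictScalars F (grIdeal I) ⊓ restrictTotalDegree σ F d) =
    Submodule.map (homogeneousComponent d)
        (Submodule.restrictScalars F I ⊓ restrictTotalDegree σ F d) := by
  apply le_antisymm
  · rintro _ ⟨f, ⟨hfJ, _⟩, rfl⟩
    obtain ⟨f', hf'I, hdeg, heq⟩ := exists_lower hfJ d
    exact ⟨f', ⟨hf'I, (mem_restrictTotalDegree _ _ _).mpr hdeg⟩, heq⟩
  · rintro _ ⟨f, ⟨hfI, hfd⟩, rfl⟩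
    by_cases h0 : homogeneousComponent d f = 0
    · rw [h0]; exact Submodule.zero_mem _
    · have hfne : f ≠ 0 := by rintro rfl; simp at h0
      have hdeg : f.totalDegree = d := by
        have h1 := (mem_restrictTotalDegree _ _ _).mp hfd
        by_contra h
        exact h0 (homogeneousComponent_eq_zero _ _ (by omega))
      refine ⟨homogeneousComponent d f, ⟨?_, ?_⟩, ?_⟩
      · exact Ideal.subset_span ⟨f, hfI, hfne, by rw [hdeg]⟩
      · exact (mem_restrictTotalDegree _ _ _).mpr
          (homogeneousComponent_isHomogeneous d f).totalDegree_le
      · rw [homogeneousComponent_of_mem (homogeneousComponent_mem d f), if_pos rfl]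

lemma finrank_eq_map_add_inf_ker {M M₂ : Type*} [AddCommGroup M] [Module F M]
    [AddCommGroup M₂] [Module F M₂] (W : Submodule F M) [FiniteDimensional F W]
    (φ : M →ₗ[F] M₂) :
    Module.finrank F W =
      Module.finrank F (W.map φ) + Module.finrank F ↥(W ⊓ LinearMap.ker φ) := by
  have h := LinearMap.finrank_range_add_finrank_ker (φ.domRestrict W)
  rw [LinearMap.range_domRestrict, LinearMap.ker_domRestrict] at h
  have e : ↥(Submodule.comap W.subtype (LinearMap.ker φ)) ≃ₗ[F] ↥(W ⊓ LinearMap.ker φ) := by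
    have hEq2 : Submodule.comap W.subtype (LinearMap.ker φ)
        = Submodule.comap W.subtype (W ⊓ LinearMap.ker φ) := by
      ext x
      simp [Submodule.mem_comap, x.2]
    rw [hEq2]
    exact Submodule.comapSubtypeEquivOfLe inf_le_left
  rw [e.finrank_eq] at h
  omega

lemma inf_ker_succ (d : ℕ) :
    restrictTotalDegree σ F (d + 1) ⊓
      LinearMap.ker (homogeneousComponent (σ := σ) (R := F) (d + 1)) =
    restrictTotalDegree σ F d := by
  ext f
  simp only [Submodule.mem_inf, mem_restrictTotalDegree, LinearMap.mem_ker]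
  constructor
  · rintro ⟨hle, hker⟩
    by_contra h
    push_neg at h
    have hdeg : f.totalDegree = d + 1 := by omega
    have hne : f ≠ 0 := by
      rintro rfl
      simp at h
    exact top_ne_zero hne (by rw [hdeg]; exact hker)
  · intro h
    exact ⟨h.trans (Nat.le_succ d), homogeneousComponent_eq_zero _ _ (by omega)⟩

lemma inf_ker_zero :
    restrictTotalDegree σ F 0 ⊓
      LinearMap.ker (homogeneousComponent (σ := σ) (R := F) 0) = ⊥ := by
  ext f
  simp only [Submodule.mem_inf, mem_restrictTotalDegree, LinearMap.mem_ker,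
    Submodule.mem_bot, Nat.le_zero]
  constructor
  · rintro ⟨hdeg, hker⟩
    by_contra hne
    exact top_ne_zero hne (by rw [hdeg]; exact hker)
  · rintro rfl
    simp

variable [Finite σ]

lemma finrank_inf_eq (I : Ideal (MvPolynomial σ F)) (d : ℕ) :
    Module.finrank F ↥(Submodule.restrictScalars F I ⊓ restrictTotalDegree σ F d) =
    Module.finrank F ↥(Submodule.restrictScalars F (grIdeal I) ⊓ restrictTotalDegree σ F d) := by
  induction d with
  | zero =>
    haveI hI : FiniteDimensional F
        ↥(Submodule.restrictScalars F I ⊓ restrictTotalDegree σ F 0) :=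
      Submodule.finiteDimensional_of_le inf_le_right
    haveI hJ : FiniteDimensional F
        ↥(Submodule.restrictScalars F (grIdeal I) ⊓ restrictTotalDegree σ F 0) :=
      Submodule.finiteDimensional_of_le inf_le_right
    have e1 := finrank_eq_map_add_inf_ker
      (Submodule.restrictScalars F I ⊓ restrictTotalDegree σ F 0) (homogeneousComponent 0)
    have e2 := finrank_eq_map_add_inf_ker
      (Submodule.restrictScalars F (grIdeal I) ⊓ restrictTotalDegree σ F 0)
      (homogeneousComponent 0)
    rw [inf_assoc, inf_ker_zero, inf_bot_eq] at e1
    rw [inf_assoc, inf_ker_zero, inf_bot_eq, map_inf_eq] at e2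
    rw [e1, e2]
  | succ d ih =>
    haveI hI : FiniteDimensional F
        ↥(Submodule.restrictScalars F I ⊓ restrictTotalDegree σ F (d + 1)) :=
      Submodule.finiteDimensional_of_le inf_le_right
    haveI hJ : FiniteDimensional F
        ↥(Submodule.restrictScalars F (grIdeal I) ⊓ restrictTotalDegree σ F (d + 1)) :=
      Submodule.finiteDimensional_of_le inf_le_right
    have e1 := finrank_eq_map_add_inf_ker
      (Submodule.restrictScalars F I ⊓ restrictTotalDegree σ F (d + 1))
      (homogeneousComponent (d + 1))
    have e2 := finrank_eq_map_add_inf_ker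
      (Submodule.restrictScalars F (grIdeal I) ⊓ restrictTotalDegree σ F (d + 1))
      (homogeneousComponent (d + 1))
    rw [inf_assoc, inf_ker_succ] at e1
    rw [inf_assoc, inf_ker_succ, map_inf_eq] at e2
    omega

end GrAux

/-- For a finite locus Z ⊆ F^N, the quotient by the associated graded ideal of the
vanishing ideal of Z has dimension |Z|. -/
theorem finrank_quotient_grIdeal (F : Type*) [Field F] (N : ℕ)
    (Z : Set (Fin N → F)) (hZ : Z.Finite) :
    Module.finrank F (MvPolynomial (Fin N) F ⧸ grIdeal (vanIdeal F Z)) = Nat.card Z := by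
  classical
  haveI := hZ.fintype
  set I : Ideal (MvPolynomial (Fin N) F) := vanIdeal F Z with hI
  set J : Ideal (MvPolynomial (Fin N) F) := grIdeal I with hJ
  -- interpolation polynomials
  have interp : ∀ z : Z, ∃ p : MvPolynomial (Fin N) F,
      ∀ w : Z, eval (w : Fin N → F) p = if w = z then 1 else 0 := by
    intro z
    have step : ∀ w : Z, w ≠ z → ∃ p : MvPolynomial (Fin N) F,
        eval (z : Fin N → F) p = 1 ∧ eval (w : Fin N → F) p = 0 := by
      intro w hw
      have hex : ∃ i, (z : Fin N → F) i ≠ (w : Fin N → F) i := by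
        by_contra h
        push_neg at h
        exact hw (Subtype.ext (funext h).symm)
      obtain ⟨i, hi⟩ := hex
      refine ⟨C ((z : Fin N → F) i - (w : Fin N → F) i)⁻¹ * (X i - C ((w : Fin N → F) i)),
        ?_, ?_⟩
      · simp only [map_mul, map_sub, eval_C, eval_X]
        exact inv_mul_cancel₀ (sub_ne_zero.mpr hi)
      · simp
    choose! q hq1 hq2 using step
    refine ⟨∏ w ∈ Finset.univ.erase z, q w, fun w => ?_⟩
    rcases eq_or_ne w z with rfl | hw
    · rw [if_pos rfl, map_prod]
      exact Finset.prod_eq_one fun x hx => hq1 x (Finset.ne_of_mem_erase hx)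
    · rw [if_neg hw, map_prod]
      exact Finset.prod_eq_zero (Finset.mem_erase.mpr ⟨hw, Finset.mem_univ w⟩) (hq2 w hw)
  choose p hp using interp
  -- evaluation as a linear map
  let L : MvPolynomial (Fin N) F →ₗ[F] (Z → F) :=
    { toFun := fun f z => eval (z : Fin N → F) f
      map_add' := fun f g => by funext z; simp
      map_smul' := fun c f => by funext z; simp [smul_eval] }
  have hkerL : LinearMap.ker L = Submodule.restrictScalars F I := by
    ext f
    constructor
    · intro h x hx
      exact congrFun (LinearMap.mem_ker.mp h) ⟨x, hx⟩
    · intro h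
      refine LinearMap.mem_ker.mpr (funext fun z => ?_)
      exact h z z.2
  -- quotient map by (the restriction of) J
  let mk : MvPolynomial (Fin N) F →ₗ[F]
      (MvPolynomial (Fin N) F ⧸ Submodule.restrictScalars F J) :=
    (Submodule.restrictScalars F J).mkQ
  have hkermk : LinearMap.ker mk = Submodule.restrictScalars F J :=
    Submodule.ker_mkQ _
  set V : ℕ → Submodule F (MvPolynomial (Fin N) F) :=
    fun d => restrictTotalDegree (Fin N) F d with hV
  have hVmono : ∀ {a b : ℕ}, a ≤ b → V a ≤ V b := by
    intro a b hab f hf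
    rw [hV, mem_restrictTotalDegree] at hf ⊢
    omega
  set WI : ℕ → Submodule F (Z → F) := fun d => (V d).map L with hWI
  set WJ : ℕ → Submodule F (MvPolynomial (Fin N) F ⧸ Submodule.restrictScalars F J) :=
    fun d => (V d).map mk with hWJ
  have hdim : ∀ d, Module.finrank F (WI d) = Module.finrank F (WJ d) := by
    intro d
    have h1 := GrAux.finrank_eq_map_add_inf_ker (V d) L
    have h2 := GrAux.finrank_eq_map_add_inf_ker (V d) mk
    rw [hkerL] at h1
    rw [hkermk] at h2
    have h3 := GrAux.finrank_inf_eq I d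
    rw [inf_comm (Submodule.restrictScalars F I) (V d)] at h3
    rw [inf_comm (Submodule.restrictScalars F (grIdeal I)) (V d)] at h3
    rw [← hJ] at h3
    show Module.finrank F ↥(Submodule.map L (V d)) = Module.finrank F ↥(Submodule.map mk (V d))
    omega
  set d0 : ℕ := Finset.univ.sup fun z : Z => (p z).totalDegree with hd0
  have hWItop : ∀ d, d0 ≤ d → WI d = ⊤ := by
    intro d hd
    refine eq_top_iff.mpr fun v _ => ?_
    refine ⟨∑ z, v z • p z, ?_, ?_⟩
    · refine Submodule.sum_mem _ fun z _ => ?_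
      rw [hV]
      rw [mem_restrictTotalDegree]
      exact (totalDegree_smul_le _ _).trans ((Finset.le_sup (Finset.mem_univ z)).trans hd)
    · rw [map_sum]
      funext w
      have : ∀ z : Z, L (v z • p z) w = if w = z then v z else 0 := by
        intro z
        rw [map_smul]
        show v z * eval (w : Fin N → F) (p z) = _
        rw [hp z w]
        split <;> simp
      simp only [Finset.sum_apply, this]
      simp
  have hWIfr : ∀ d, d0 ≤ d → Module.finrank F (WI d) = Nat.card Z := by
    intro d hd
    rw [hWItop d hd, finrank_top, Module.finrank_pi, Nat.card_eq_fintype_card]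
  haveI hfinWJ : ∀ d, FiniteDimensional F (WJ d) := by
    intro d
    haveI : FiniteDimensional F (V d) := by
      rw [hV]; infer_instance
    exact Module.Finite.map (V d) mk
  have hWJstab : ∀ d, d0 ≤ d → WJ d = WJ d0 := by
    intro d hd
    refine (Submodule.eq_of_le_of_finrank_le (Submodule.map_mono (hVmono hd)) ?_).symm
    rw [← hdim, ← hdim, hWIfr d hd, hWIfr d0 le_rfl]
  have htop : WJ d0 = ⊤ := by
    refine eq_top_iff.mpr ?_
    have hsup : (⨆ d, WJ d) = ⊤ := by
      rw [hWJ]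
      simp only [← Submodule.map_iSup]
      have hVtop : (⨆ d, V d) = ⊤ := by
        refine eq_top_iff.mpr fun f _ => ?_
        have hmono : Monotone V := fun _ _ h => hVmono h
        have hdir : Directed (· ≤ ·) V := hmono.directed_le
        refine (Submodule.mem_iSup_of_directed V hdir).mpr ⟨f.totalDegree, ?_⟩
        rw [hV, mem_restrictTotalDegree]
      rw [hVtop, Submodule.map_top, Submodule.range_mkQ]
    rw [← hsup]
    refine iSup_le fun d => ?_
    rcases le_total d d0 with h | h
    · exact Submodule.map_mono (hVmono h)
    · exact (hWJstab d h).le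
  have hquot : Module.finrank F (MvPolynomial (Fin N) F ⧸ J) =
      Module.finrank F (MvPolynomial (Fin N) F ⧸ Submodule.restrictScalars F J) :=
    (Submodule.Quotient.restrictScalarsEquiv F J).finrank_eq.symm
  rw [hquot, ← finrank_top, ← htop, ← hdim, hWIfr d0 le_rfl]
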